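/- Let g : ℝⁿ → ℝ̄ be an epi-pointed function, let η > 0 and let x ∈ ℝⁿ be such that η + g**(x) > g(x). Then ∂_η g(x) = cl( ∂_η g(x) ∩ int(dom g*) ). Consequently, for every η ≥ 0, ∂_η g(x) = ∩_{γ>0} cl( ∂_{η+γ} g(x) ∩ int(dom g*) ). -/

import Mathlib

open scoped RealInnerProductSpace Pointwise
open Set Filter

noncomputable section

/-- `En n` is the Euclidean space `ℝⁿ`. -/
abbrev En (n : ℕ) := EuclideanSpace ℝ (Fin n)

/-- The epigraph of an extended-real-valued function. -/
def epiS {n : ℕ} (g : En n → EReal) : Set (En n × ℝ) := {p | g p.1 ≤ (p.2 : EReal)}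

/-- The Fenchel conjugate `g*`. -/
def conjF {n : ℕ} (g : En n → EReal) (y : En n) : EReal :=
  ⨆ x, (⟪y, x⟫ : EReal) - g x

/-- The effective domain of `g`. -/
def dm {n : ℕ} (g : En n → EReal) : Set (En n) := {x | g x < ⊤}

/-- `g` is proper: never `-∞` and not identically `+∞`. -/
def ProperF {n : ℕ} (g : En n → EReal) : Prop := (∃ x, g x < ⊤) ∧ ∀ x, ⊥ < g x

/-- The ε-subdifferential `∂_ε g(x)` (empty when `g x` is not finite). -/
def eSub {n : ℕ} (g : En n → EReal) (ε : ℝ) (x : En n) : Set (En n) :=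
  {y | ∃ r : ℝ, g x = (r : EReal) ∧ ∀ z, ((⟪y, z - x⟫ + r - ε : ℝ) : EReal) ≤ g z}

/-- The indicator function `δ_A` (0 on `A`, `+∞` outside). -/
def indE {n : ℕ} (A : Set (En n)) (x : En n) : EReal :=
  Set.indicator Aᶜ (fun _ => (⊤ : EReal)) x

/-- The ε-normal set `N^ε_A(x) = ∂_ε δ_A(x)`. -/
def eNormal {n : ℕ} (A : Set (En n)) (ε : ℝ) (x : En n) : Set (En n) :=
  eSub (indE A) ε x

/-- `Γ₀`: proper, lower semicontinuous, convex. -/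
def Gamma0 {n : ℕ} (g : En n → EReal) : Prop :=
  ProperF g ∧ LowerSemicontinuous g ∧ Convex ℝ (epiS g)

/-- Epi-pointed: `g*` is proper with nonempty interior of its domain. -/
def EpiPointed {n : ℕ} (g : En n → EReal) : Prop :=
  ProperF (conjF g) ∧ (interior (dm (conjF g))).Nonempty

/-- The closed convex hull `c̄o g`: the function whose epigraph is the closed
convex hull of `epi g`. -/
def cchF {n : ℕ} (g : En n → EReal) (x : En n) : EReal :=
  sInf ((fun r : ℝ => (r : EReal)) '' {r | (x, r) ∈ closure (convexHull ℝ (epiS g))})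

/-- The convex hull `co g`: the function whose epigraph is the convex hull of `epi g`. -/
def coF {n : ℕ} (g : En n → EReal) (x : En n) : EReal :=
  sInf ((fun r : ℝ => (r : EReal)) '' {r | (x, r) ∈ convexHull ℝ (epiS g)})

/-- Membership in the generalized simplex `Δ(T)`. -/
def inSimplex {T : Type*} (l : T →₀ ℝ) : Prop :=
  (∀ t, 0 ≤ l t ∧ l t ≤ 1) ∧ (∑ t ∈ l.support, l t) = 1

/-- Membership in `Δ^ε(T)`. -/
def inDelta {T : Type*} (ε : ℝ) (e : T →₀ ℝ) : Prop :=
  (∀ t, 0 ≤ e t ∧ e t ≤ ε) ∧ (∑ t ∈ e.support, e t) = ε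

end

section AuxLemmas

variable {n : ℕ}

lemma ereal_trichot (e : EReal) : e = ⊥ ∨ (∃ u : ℝ, e = (u : EReal)) ∨ e = ⊤ := by
  induction e with
  | bot => exact Or.inl rfl
  | coe u => exact Or.inr (Or.inl ⟨u, rfl⟩)
  | top => exact Or.inr (Or.inr rfl)

lemma term_le_conj (g : En n → EReal) (y z : En n) :
    (⟪y, z⟫ : EReal) - g z ≤ conjF g y := le_iSup (fun z => (⟪y, z⟫ : EReal) - g z) z

lemma eSub_isClosed (g : En n → EReal) (ε : ℝ) (x : En n) : IsClosed (eSub g ε x) := by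
  by_cases h : ∃ r : ℝ, g x = (r : EReal)
  · obtain ⟨r, hr⟩ := h
    have hset : eSub g ε x = ⋂ z, {y : En n | ((⟪y, z - x⟫ + r - ε : ℝ) : EReal) ≤ g z} := by
      ext y
      constructor
      · rintro ⟨r', hr', hy⟩
        have : r = r' := by rw [hr] at hr'; exact_mod_cast hr'
        subst this
        exact Set.mem_iInter.2 hy
      · intro hy; exact ⟨r, hr, Set.mem_iInter.1 hy⟩
    rw [hset]
    refine isClosed_iInter fun z => ?_
    have hc : Continuous fun y : En n => ((⟪y, z - x⟫ + r - ε : ℝ) : EReal) := by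
      apply continuous_coe_real_ereal.comp
      exact ((continuous_id.inner continuous_const).add continuous_const).sub continuous_const
    exact IsClosed.preimage hc isClosed_Iic
  · have : eSub g ε x = ∅ := by
      ext y
      simp only [eSub, Set.mem_setOf_eq, Set.mem_empty_iff_false, iff_false]
      rintro ⟨r, hr, -⟩
      exact h ⟨r, hr⟩
    rw [this]; exact isClosed_empty

lemma conj_combo (g : En n → EReal) {a b : En n} {sa sb p q : ℝ}
    (hp : 0 ≤ p) (hq : 0 ≤ q) (hpq : p + q = 1)
    (ha : conjF g a ≤ (sa : EReal)) (hb : conjF g b ≤ (sb : EReal)) :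
    conjF g (p • a + q • b) ≤ ((p * sa + q * sb : ℝ) : EReal) := by
  refine iSup_le fun z => ?_
  rcases ereal_trichot (g z) with hz | ⟨u, hz⟩ | hz
  · exfalso
    have h1 : (⟪a, z⟫ : EReal) - g z ≤ (sa : EReal) := (term_le_conj g a z).trans ha
    rw [hz, EReal.coe_sub_bot] at h1
    exact absurd (top_le_iff.1 h1) (EReal.coe_ne_top _)
  · have h1 : ⟪a, z⟫ - u ≤ sa := by
      have := (term_le_conj g a z).trans ha
      rw [hz, ← EReal.coe_sub] at this
      exact_mod_cast this
    have h2 : ⟪b, z⟫ - u ≤ sb := by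
      have := (term_le_conj g b z).trans hb
      rw [hz, ← EReal.coe_sub] at this
      exact_mod_cast this
    rw [hz, ← EReal.coe_sub, EReal.coe_le_coe_iff]
    have hinner : ⟪p • a + q • b, z⟫ = p * ⟪a, z⟫ + q * ⟪b, z⟫ := by
      rw [inner_add_left, real_inner_smul_left, real_inner_smul_left]
    rw [hinner]
    have e1 := mul_le_mul_of_nonneg_left h1 hp
    have e2 := mul_le_mul_of_nonneg_left h2 hq
    rw [mul_sub] at e1 e2
    have hu : u = p * u + q * u := by rw [← add_mul, hpq, one_mul]
    linarith
  · rw [hz, EReal.sub_top]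
    exact bot_le

lemma mem_eSub_iff (g : En n → EReal) {x : En n} {r : ℝ} (hr : g x = (r : EReal)) (ε : ℝ)
    (y : En n) :
    y ∈ eSub g ε x ↔ conjF g y ≤ ((⟪y, x⟫ + ε - r : ℝ) : EReal) := by
  constructor
  · rintro ⟨r', hr', h⟩
    have : r = r' := by rw [hr] at hr'; exact_mod_cast hr'
    subst this
    refine iSup_le fun z => ?_
    have hz := h z
    rcases ereal_trichot (g z) with hgz | ⟨u, hgz⟩ | hgz
    · rw [hgz] at hz; exact absurd (le_bot_iff.1 hz) (EReal.coe_ne_bot _)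
    · rw [hgz, ← EReal.coe_sub, EReal.coe_le_coe_iff]
      rw [hgz, EReal.coe_le_coe_iff] at hz
      have : ⟪y, z - x⟫ = ⟪y, z⟫ - ⟪y, x⟫ := inner_sub_right y z x
      linarith [hz, this.symm.le, this.le]
    · rw [hgz, EReal.sub_top]; exact bot_le
  · intro h
    refine ⟨r, hr, fun z => ?_⟩
    have hz := (term_le_conj g y z).trans h
    rcases ereal_trichot (g z) with hgz | ⟨u, hgz⟩ | hgz
    · exfalso
      rw [hgz, EReal.coe_sub_bot] at hz
      exact absurd (top_le_iff.1 hz) (EReal.coe_ne_top _)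
    · rw [hgz, ← EReal.coe_sub, EReal.coe_le_coe_iff] at hz
      rw [hgz, EReal.coe_le_coe_iff]
      have : ⟪y, z - x⟫ = ⟪y, z⟫ - ⟪y, x⟫ := inner_sub_right y z x
      linarith
    · rw [hgz]; exact le_top

lemma dm_convex (g : En n → EReal) (hbot : ∀ y, ⊥ < conjF g y) :
    Convex ℝ (dm (conjF g)) := by
  intro a ha b hb p q hp hq hpq
  have hane : conjF g a ≠ ⊤ := ha.ne
  have hbne : conjF g b ≠ ⊤ := hb.ne
  have hsa : conjF g a ≤ ((conjF g a).toReal : EReal) := by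
    rw [EReal.coe_toReal hane (hbot a).ne']
  have hsb : conjF g b ≤ ((conjF g b).toReal : EReal) := by
    rw [EReal.coe_toReal hbne (hbot b).ne']
  have := conj_combo g hp hq hpq hsa hsb
  exact lt_of_le_of_lt this (EReal.coe_lt_top _)

lemma dense_lemma (g : En n → EReal) (hg : EpiPointed g) {x : En n} {r : ℝ}
    (hr : g x = (r : EReal)) {ε : ℝ} {y₀ : En n} {s₀ : ℝ}
    (h₀ : conjF g y₀ = (s₀ : EReal)) (hs₀ : s₀ < ⟪y₀, x⟫ + ε - r) :
    eSub g ε x ⊆ closure (eSub g ε x ∩ interior (dm (conjF g))) := by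
  obtain ⟨hprop, y₁, hy₁⟩ := hg
  have hbot := hprop.2
  have hD : Convex ℝ (dm (conjF g)) := dm_convex g hbot
  have hy₁D : y₁ ∈ dm (conjF g) := interior_subset hy₁
  have hu₁ : conjF g y₁ = ((conjF g y₁).toReal : EReal) :=
    (EReal.coe_toReal hy₁D.ne (hbot y₁).ne').symm
  set u₁ := (conjF g y₁).toReal with hu₁def
  have hy₀D : y₀ ∈ dm (conjF g) := by
    show conjF g y₀ < ⊤
    rw [h₀]; exact EReal.coe_lt_top _
  set A := s₀ - ⟪y₀, x⟫ - (ε - r) with hA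
  set B := u₁ - ⟪y₁, x⟫ - (ε - r) with hB
  have hAneg : A < 0 := by rw [hA]; linarith
  have hden : 0 < max B 0 - A := by
    have := le_max_right B 0; linarith
  set s := (-A) / (max B 0 - A) with hs
  have hs0 : 0 < s := div_pos (by linarith) hden
  have hs1 : s ≤ 1 := (div_le_one hden).2 (by have := le_max_right B 0; linarith)
  have hsden : s * (max B 0 - A) = -A := by
    rw [hs]; field_simp
  set w := s • y₁ + (1 - s) • y₀ with hw
  have hwint : w ∈ interior (dm (conjF g)) :=
    hD.combo_interior_closure_mem_interior hy₁ (subset_closure hy₀D) hs0 (by linarith)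
      (by ring)
  have hwe : w ∈ eSub g ε x := by
    rw [mem_eSub_iff g hr]
    have hcc := conj_combo g hs0.le (by linarith : (0:ℝ) ≤ 1 - s) (by ring) hu₁.le h₀.le
    refine hcc.trans ?_
    rw [EReal.coe_le_coe_iff]
    have hinner : ⟪w, x⟫ = s * ⟪y₁, x⟫ + (1 - s) * ⟪y₀, x⟫ := by
      rw [hw, inner_add_left, real_inner_smul_left, real_inner_smul_left]
    have key : s * (B - A) ≤ s * (max B 0 - A) :=
      mul_le_mul_of_nonneg_left (by have := le_max_left B 0; linarith) hs0.le
    have expand : s * u₁ + (1 - s) * s₀ - (s * ⟪y₁, x⟫ + (1 - s) * ⟪y₀, x⟫ + ε - r)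
        = A + s * (B - A) := by rw [hA, hB]; ring
    rw [hinner]
    linarith [key, hsden, expand]
  -- now density
  intro y hy
  have hy' := (mem_eSub_iff g hr ε y).1 hy
  have hw' := (mem_eSub_iff g hr ε w).1 hwe
  have hyD : y ∈ dm (conjF g) :=
    lt_of_le_of_lt hy' (EReal.coe_lt_top _)
  have hmem : ∀ k : ℕ, (1 / (k + 1 : ℝ)) • w + (1 - 1 / (k + 1 : ℝ)) • y
      ∈ eSub g ε x ∩ interior (dm (conjF g)) := by
    intro k
    have hk0 : (0:ℝ) < 1 / (k + 1 : ℝ) := by positivity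
    have hk1 : (1 / (k + 1 : ℝ)) ≤ 1 := by
      rw [div_le_one (by positivity)]
      have : (0:ℝ) ≤ (k : ℝ) := Nat.cast_nonneg k
      linarith
    constructor
    · rw [mem_eSub_iff g hr]
      have hcc := conj_combo g hk0.le (by linarith : (0:ℝ) ≤ 1 - 1 / (k + 1 : ℝ))
        (by ring) hw' hy'
      refine hcc.trans ?_
      rw [EReal.coe_le_coe_iff]
      have hinner : ⟪(1 / (k + 1 : ℝ)) • w + (1 - 1 / (k + 1 : ℝ)) • y, x⟫
          = (1 / (k + 1 : ℝ)) * ⟪w, x⟫ + (1 - 1 / (k + 1 : ℝ)) * ⟪y, x⟫ := by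
        rw [inner_add_left, real_inner_smul_left, real_inner_smul_left]
      rw [hinner]; ring_nf; exact le_refl _
    · exact hD.combo_interior_closure_mem_interior hwint (subset_closure hyD) hk0
        (by linarith) (by ring)
  have htend : Filter.Tendsto
      (fun k : ℕ => (1 / (k + 1 : ℝ)) • w + (1 - 1 / (k + 1 : ℝ)) • y) atTop (nhds y) := by
    have h1 : Filter.Tendsto (fun k : ℕ => (1 / (k + 1 : ℝ))) atTop (nhds 0) :=
      tendsto_one_div_add_atTop_nhds_zero_nat
    have := (h1.smul_const w).add (((tendsto_const_nhds (x := (1:ℝ))).sub h1).smul_const y)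
    simpa using this
  exact mem_closure_of_tendsto htend (Filter.Eventually.of_forall hmem)

lemma coe_le_of_forall_sub (a : ℝ) (b : EReal)
    (h : ∀ γ : ℝ, 0 < γ → ((a - γ : ℝ) : EReal) ≤ b) : (a : EReal) ≤ b := by
  rcases ereal_trichot b with hb | ⟨u, hb⟩ | hb
  · exfalso
    have := h 1 one_pos
    rw [hb, le_bot_iff] at this
    exact EReal.coe_ne_bot _ this
  · rw [hb, EReal.coe_le_coe_iff]
    by_contra hc
    push_neg at hc
    have := h ((a - u) / 2) (by linarith)
    rw [hb, EReal.coe_le_coe_iff] at this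
    linarith
  · rw [hb]; exact le_top

end AuxLemmas


/-- For an epi-pointed `g`, `η > 0` and `x` with `η + g**(x) > g(x)`,
`∂_η g(x) = cl (∂_η g(x) ∩ int (dom g*))`; consequently, for every `η ≥ 0`,
`∂_η g(x) = ⋂_{γ>0} cl (∂_{η+γ} g(x) ∩ int (dom g*))`. -/
theorem statement6 {n : ℕ} (g : En n → EReal) (x : En n)
    (hg : EpiPointed g) (η : ℝ) (hη : 0 < η)
    (hx : g x < (η : EReal) + conjF (conjF g) x) :
    eSub g η x = closure (eSub g η x ∩ interior (dm (conjF g))) ∧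
    ∀ η' : ℝ, 0 ≤ η' →
      eSub g η' x = ⋂ γ > (0:ℝ), closure (eSub g (η' + γ) x ∩ interior (dm (conjF g))) := by
  by_cases hfin : ∃ r : ℝ, g x = (r : EReal)
  case neg =>
    have hempty : ∀ ε : ℝ, eSub g ε x = ∅ := by
      intro ε; ext y
      simp only [eSub, Set.mem_setOf_eq, Set.mem_empty_iff_false, iff_false]
      rintro ⟨r, hr, -⟩; exact hfin ⟨r, hr⟩
    constructor
    · rw [hempty, Set.empty_inter, closure_empty]
    · intro η' _
      rw [hempty]
      symm
      apply Set.eq_empty_of_subset_empty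
      intro y hy
      have h1 := Set.mem_iInter₂.1 hy 1 one_pos
      rw [hempty, Set.empty_inter, closure_empty] at h1
      exact h1
  case pos =>
  obtain ⟨r, hr⟩ := hfin
  have hstrict : ∃ y₀ : En n, ((r - η : ℝ) : EReal) < (⟪x, y₀⟫ : EReal) - conjF g y₀ := by
    by_contra hcon
    push_neg at hcon
    have hS : conjF (conjF g) x ≤ ((r - η : ℝ) : EReal) := iSup_le hcon
    have h2 : (η : EReal) + conjF (conjF g) x ≤ (η : EReal) + ((r - η : ℝ) : EReal) :=
      add_le_add le_rfl hS
    have h3 : (η : EReal) + ((r - η : ℝ) : EReal) = (r : EReal) := by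
      rw [← EReal.coe_add]; norm_num
    rw [h3] at h2
    exact absurd (hx.trans_le h2) (by rw [hr]; exact lt_irrefl _)
  obtain ⟨y₀, hy₀⟩ := hstrict
  have hy₀top : conjF g y₀ ≠ ⊤ := by
    intro htop; rw [htop, EReal.sub_top] at hy₀
    exact absurd hy₀ (by simp)
  have hy₀bot : conjF g y₀ ≠ ⊥ := (hg.1.2 y₀).ne'
  set s₀ := (conjF g y₀).toReal with hs₀def
  have h₀ : conjF g y₀ = (s₀ : EReal) := (EReal.coe_toReal hy₀top hy₀bot).symm
  have hs₀ : s₀ < ⟪y₀, x⟫ + η - r := by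
    rw [h₀, ← EReal.coe_sub, EReal.coe_lt_coe_iff] at hy₀
    have hcomm := real_inner_comm x y₀
    linarith
  have part1 : eSub g η x = closure (eSub g η x ∩ interior (dm (conjF g))) :=
    Set.Subset.antisymm (dense_lemma g hg hr h₀ hs₀)
      (closure_minimal Set.inter_subset_left (eSub_isClosed g η x))
  refine ⟨part1, ?_⟩
  intro η' hη'
  apply Set.Subset.antisymm
  · intro y hy
    refine Set.mem_iInter₂.2 fun γ hγ => ?_
    have hy' := (mem_eSub_iff g hr η' y).1 hy
    have hytop : conjF g y ≠ ⊤ := (lt_of_le_of_lt hy' (EReal.coe_lt_top _)).ne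
    have hybot : conjF g y ≠ ⊥ := (hg.1.2 y).ne'
    have h₀y : conjF g y = ((conjF g y).toReal : EReal) := (EReal.coe_toReal hytop hybot).symm
    have hsy : (conjF g y).toReal < ⟪y, x⟫ + (η' + γ) - r := by
      have h5 : ((conjF g y).toReal : EReal) ≤ ((⟪y, x⟫ + η' - r : ℝ) : EReal) := h₀y ▸ hy'
      rw [EReal.coe_le_coe_iff] at h5
      linarith
    have hy2 : y ∈ eSub g (η' + γ) x := by
      rw [mem_eSub_iff g hr, h₀y]
      exact_mod_cast hsy.le
    exact dense_lemma g hg hr h₀y hsy hy2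
  · intro y hy
    have hmem : ∀ γ : ℝ, 0 < γ → y ∈ eSub g (η' + γ) x := fun γ hγ =>
      closure_minimal Set.inter_subset_left (eSub_isClosed g (η' + γ) x)
        (Set.mem_iInter₂.1 hy γ hγ)
    obtain ⟨r', hr', -⟩ := hmem 1 one_pos
    refine ⟨r', hr', fun z => ?_⟩
    apply coe_le_of_forall_sub
    intro γ hγ
    obtain ⟨r'', hr'', hz⟩ := hmem γ hγ
    have hre : r'' = r' := by rw [hr'] at hr''; exact_mod_cast hr''.symm
    subst hre
    have heq : ⟪y, z - x⟫ + r'' - η' - γ = ⟪y, z - x⟫ + r'' - (η' + γ) := by ring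
    rw [heq]
    exact hz z
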